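/- For every a, b ∈ {0,1,2}: the sum over all (x₀,x₁) ∈ {0,1}² and (y₀,y₁) ∈ {0,1}² such that x_b = y_a — where x = (x₀, x₁, x₀⊕x₁) and y = (y₀, y₁, y₀⊕y₁⊕1) — of ⟨Ψ| (M_{x₀x₁|a} ⊗ N_{y₀y₁|b}) |Ψ⟩ equals 1. That is, the ideal magic square strategy wins the magic square game with probability 1 on every input pair. -/

import Mathlib

open Matrix
open scoped Matrix Kronecker

noncomputable section

/-- Rank-1 projector onto `|0⟩`. -/
def P0 : Matrix (Fin 2) (Fin 2) ℂ := !![1, 0; 0, 0]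
/-- Rank-1 projector onto `|1⟩`. -/
def P1 : Matrix (Fin 2) (Fin 2) ℂ := !![0, 0; 0, 1]
/-- Rank-1 projector onto `|+⟩ = (|0⟩+|1⟩)/√2`. -/
def Pp : Matrix (Fin 2) (Fin 2) ℂ := !![1/2, 1/2; 1/2, 1/2]
/-- Rank-1 projector onto `|−⟩ = (|0⟩−|1⟩)/√2`. -/
def Pm : Matrix (Fin 2) (Fin 2) ℂ := !![1/2, -(1/2); -(1/2), 1/2]
/-- Rank-1 projector onto `|+i⟩ = (|0⟩+i|1⟩)/√2`. -/
def Ppi : Matrix (Fin 2) (Fin 2) ℂ := !![1/2, -(Complex.I/2); Complex.I/2, 1/2]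
/-- Rank-1 projector onto `|−i⟩ = (|0⟩−i|1⟩)/√2`. -/
def Pmi : Matrix (Fin 2) (Fin 2) ℂ := !![1/2, Complex.I/2; -(Complex.I/2), 1/2]

/-- The 4×4 magic-square projectors `Π⁰_{ab}` (outcome 0), for `a, b ∈ {0,1,2}`. -/
def Pi0 : Fin 3 → Fin 3 → Matrix (Fin 2 × Fin 2) (Fin 2 × Fin 2) ℂ :=
  ![![P0 ⊗ₖ (1 : Matrix (Fin 2) (Fin 2) ℂ),
     (1 : Matrix (Fin 2) (Fin 2) ℂ) ⊗ₖ P0,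
     P0 ⊗ₖ P0 + P1 ⊗ₖ P1],
    ![(1 : Matrix (Fin 2) (Fin 2) ℂ) ⊗ₖ Pp,
     Pp ⊗ₖ (1 : Matrix (Fin 2) (Fin 2) ℂ),
     Pp ⊗ₖ Pp + Pm ⊗ₖ Pm],
    ![P1 ⊗ₖ Pp + P0 ⊗ₖ Pm,
     Pp ⊗ₖ P1 + Pm ⊗ₖ P0,
     Ppi ⊗ₖ Ppi + Pmi ⊗ₖ Pmi]]

/-- `Π^e_{ab}`: outcome-`e` projector (`e : Bool`, with `Π¹ = 1 − Π⁰`). -/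
def Pi' (e : Bool) (a b : Fin 3) : Matrix (Fin 2 × Fin 2) (Fin 2 × Fin 2) ℂ :=
  if e then 1 - Pi0 a b else Pi0 a b

/-- Alice's magic-square measurement operators `M_{x₀x₁|a} = Π^{x₀}_{a0} Π^{x₁}_{a1}`. -/
def Mms (a : Fin 3) (x0 x1 : Bool) : Matrix (Fin 2 × Fin 2) (Fin 2 × Fin 2) ℂ :=
  Pi' x0 a 0 * Pi' x1 a 1

/-- Bob's magic-square measurement operators `N_{y₀y₁|b} = Π^{y₀}_{0b} Π^{y₁}_{1b}`. -/
def Nms (b : Fin 3) (y0 y1 : Bool) : Matrix (Fin 2 × Fin 2) (Fin 2 × Fin 2) ℂ :=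
  Pi' y0 0 b * Pi' y1 1 b

/-- The maximally entangled state `|Ψ⟩ = (1/2) ∑_{ij} |ij⟩ ⊗ |ij⟩` on `ℂ⁴ ⊗ ℂ⁴`. -/
def PsiMS : (Fin 2 × Fin 2) × (Fin 2 × Fin 2) → ℂ :=
  fun p => if p.1 = p.2 then 1 / 2 else 0

/-- The expectation value `⟨Ψ| A |Ψ⟩` of a 16×16 operator in the state `|Ψ⟩`. -/
def expecMS
    (A : Matrix ((Fin 2 × Fin 2) × (Fin 2 × Fin 2)) ((Fin 2 × Fin 2) × (Fin 2 × Fin 2)) ℂ) : ℂ :=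
  star PsiMS ⬝ᵥ (A *ᵥ PsiMS)

/-- Alice's full output triple `x = (x₀, x₁, x₀ ⊕ x₁)`. -/
def xtrip (x0 x1 : Bool) : Fin 3 → Bool := ![x0, x1, xor x0 x1]

/-- Bob's full output triple `y = (y₀, y₁, y₀ ⊕ y₁ ⊕ 1)`. -/
def ytrip (y0 y1 : Bool) : Fin 3 → Bool := ![y0, y1, !(xor y0 y1)]

end


set_option maxHeartbeats 1000000 in
lemma expec_kron (A B : Matrix (Fin 2 × Fin 2) (Fin 2 × Fin 2) ℂ) :
    expecMS (A ⊗ₖ B) = (∑ i, ∑ j, A i j * B i j) / 4 := by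
  simp [expecMS, dotProduct, mulVec, PsiMS, Matrix.kroneckerMap_apply,
    Fintype.sum_prod_type, Fin.sum_univ_two, Complex.conj_ofNat]
  ring

set_option maxHeartbeats 1000000 in
lemma msCase00 :
      (∑ x0 : Bool, ∑ x1 : Bool, ∑ y0 : Bool, ∑ y1 : Bool,
        if xtrip x0 x1 (0:Fin 3) = ytrip y0 y1 (0:Fin 3)
          then expecMS (Mms 0 x0 x1 ⊗ₖ Nms 0 y0 y1) else 0) = 1 := by
  simp (config := { decide := true }) only [Fintype.sum_bool, xtrip, ytrip,
    if_true, if_false]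
  simp only [expec_kron, Mms, Nms, Pi', Pi0, if_true, if_false, Bool.cond_true]
  norm_num [Matrix.mul_apply, Fintype.sum_prod_type, Fin.sum_univ_two,
    Matrix.kroneckerMap_apply, Matrix.sub_apply, Matrix.add_apply, Matrix.one_apply,
    P0, P1, Pp, Pm, Ppi, Pmi, Matrix.cons_val', Matrix.cons_val_zero, Matrix.cons_val_one,
    Matrix.head_cons, Matrix.head_fin_const, Matrix.empty_val', Prod.ext_iff,
    Prod.fst_one, Prod.snd_one, Complex.ext_iff]
  try ring_nf

set_option maxHeartbeats 1000000 in
lemma msCase01 :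
      (∑ x0 : Bool, ∑ x1 : Bool, ∑ y0 : Bool, ∑ y1 : Bool,
        if xtrip x0 x1 (1:Fin 3) = ytrip y0 y1 (0:Fin 3)
          then expecMS (Mms 0 x0 x1 ⊗ₖ Nms 1 y0 y1) else 0) = 1 := by
  simp (config := { decide := true }) only [Fintype.sum_bool, xtrip, ytrip,
    if_true, if_false]
  simp only [expec_kron, Mms, Nms, Pi', Pi0, if_true, if_false, Bool.cond_true]
  norm_num [Matrix.mul_apply, Fintype.sum_prod_type, Fin.sum_univ_two,
    Matrix.kroneckerMap_apply, Matrix.sub_apply, Matrix.add_apply, Matrix.one_apply,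
    P0, P1, Pp, Pm, Ppi, Pmi, Matrix.cons_val', Matrix.cons_val_zero, Matrix.cons_val_one,
    Matrix.head_cons, Matrix.head_fin_const, Matrix.empty_val', Prod.ext_iff,
    Prod.fst_one, Prod.snd_one, Complex.ext_iff]
  try ring_nf

set_option maxHeartbeats 1000000 in
lemma msCase02 :
      (∑ x0 : Bool, ∑ x1 : Bool, ∑ y0 : Bool, ∑ y1 : Bool,
        if xtrip x0 x1 (2:Fin 3) = ytrip y0 y1 (0:Fin 3)
          then expecMS (Mms 0 x0 x1 ⊗ₖ Nms 2 y0 y1) else 0) = 1 := by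
  simp (config := { decide := true }) only [Fintype.sum_bool, xtrip, ytrip,
    if_true, if_false]
  simp only [expec_kron, Mms, Nms, Pi', Pi0, if_true, if_false, Bool.cond_true]
  norm_num [Matrix.mul_apply, Fintype.sum_prod_type, Fin.sum_univ_two,
    Matrix.kroneckerMap_apply, Matrix.sub_apply, Matrix.add_apply, Matrix.one_apply,
    P0, P1, Pp, Pm, Ppi, Pmi, Matrix.cons_val', Matrix.cons_val_zero, Matrix.cons_val_one, Matrix.cons_val_two,
    Matrix.head_cons, Matrix.head_fin_const, Matrix.empty_val', Prod.ext_iff,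
    Prod.fst_one, Prod.snd_one, Complex.ext_iff]
  try ring_nf

set_option maxHeartbeats 1000000 in
lemma msCase10 :
      (∑ x0 : Bool, ∑ x1 : Bool, ∑ y0 : Bool, ∑ y1 : Bool,
        if xtrip x0 x1 (0:Fin 3) = ytrip y0 y1 (1:Fin 3)
          then expecMS (Mms 1 x0 x1 ⊗ₖ Nms 0 y0 y1) else 0) = 1 := by
  simp (config := { decide := true }) only [Fintype.sum_bool, xtrip, ytrip,
    if_true, if_false]
  simp only [expec_kron, Mms, Nms, Pi', Pi0, if_true, if_false, Bool.cond_true]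
  norm_num [Matrix.mul_apply, Fintype.sum_prod_type, Fin.sum_univ_two,
    Matrix.kroneckerMap_apply, Matrix.sub_apply, Matrix.add_apply, Matrix.one_apply,
    P0, P1, Pp, Pm, Ppi, Pmi, Matrix.cons_val', Matrix.cons_val_zero, Matrix.cons_val_one,
    Matrix.head_cons, Matrix.head_fin_const, Matrix.empty_val', Prod.ext_iff,
    Prod.fst_one, Prod.snd_one, Complex.ext_iff]
  try ring_nf

set_option maxHeartbeats 1000000 in
lemma msCase11 :
      (∑ x0 : Bool, ∑ x1 : Bool, ∑ y0 : Bool, ∑ y1 : Bool,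
        if xtrip x0 x1 (1:Fin 3) = ytrip y0 y1 (1:Fin 3)
          then expecMS (Mms 1 x0 x1 ⊗ₖ Nms 1 y0 y1) else 0) = 1 := by
  simp (config := { decide := true }) only [Fintype.sum_bool, xtrip, ytrip,
    if_true, if_false]
  simp only [expec_kron, Mms, Nms, Pi', Pi0, if_true, if_false, Bool.cond_true]
  norm_num [Matrix.mul_apply, Fintype.sum_prod_type, Fin.sum_univ_two,
    Matrix.kroneckerMap_apply, Matrix.sub_apply, Matrix.add_apply, Matrix.one_apply,
    P0, P1, Pp, Pm, Ppi, Pmi, Matrix.cons_val', Matrix.cons_val_zero, Matrix.cons_val_one,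
    Matrix.head_cons, Matrix.head_fin_const, Matrix.empty_val', Prod.ext_iff,
    Prod.fst_one, Prod.snd_one, Complex.ext_iff]
  try ring_nf

set_option maxHeartbeats 1000000 in
lemma msCase12 :
      (∑ x0 : Bool, ∑ x1 : Bool, ∑ y0 : Bool, ∑ y1 : Bool,
        if xtrip x0 x1 (2:Fin 3) = ytrip y0 y1 (1:Fin 3)
          then expecMS (Mms 1 x0 x1 ⊗ₖ Nms 2 y0 y1) else 0) = 1 := by
  simp (config := { decide := true }) only [Fintype.sum_bool, xtrip, ytrip,
    if_true, if_false]
  simp only [expec_kron, Mms, Nms, Pi', Pi0, if_true, if_false, Bool.cond_true]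
  norm_num [Matrix.mul_apply, Fintype.sum_prod_type, Fin.sum_univ_two,
    Matrix.kroneckerMap_apply, Matrix.sub_apply, Matrix.add_apply, Matrix.one_apply,
    P0, P1, Pp, Pm, Ppi, Pmi, Matrix.cons_val', Matrix.cons_val_zero, Matrix.cons_val_one, Matrix.cons_val_two,
    Matrix.head_cons, Matrix.head_fin_const, Matrix.empty_val', Prod.ext_iff,
    Prod.fst_one, Prod.snd_one, Complex.ext_iff]
  try ring_nf

set_option maxHeartbeats 1000000 in
lemma msCase20 :
      (∑ x0 : Bool, ∑ x1 : Bool, ∑ y0 : Bool, ∑ y1 : Bool,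
        if xtrip x0 x1 (0:Fin 3) = ytrip y0 y1 (2:Fin 3)
          then expecMS (Mms 2 x0 x1 ⊗ₖ Nms 0 y0 y1) else 0) = 1 := by
  simp (config := { decide := true }) only [Fintype.sum_bool, xtrip, ytrip,
    if_true, if_false]
  simp only [expec_kron, Mms, Nms, Pi', Pi0, if_true, if_false, Bool.cond_true]
  norm_num [Matrix.mul_apply, Fintype.sum_prod_type, Fin.sum_univ_two,
    Matrix.kroneckerMap_apply, Matrix.sub_apply, Matrix.add_apply, Matrix.one_apply,
    P0, P1, Pp, Pm, Ppi, Pmi, Matrix.cons_val', Matrix.cons_val_zero, Matrix.cons_val_one, Matrix.cons_val_two,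
    Matrix.head_cons, Matrix.head_fin_const, Matrix.empty_val', Prod.ext_iff,
    Prod.fst_one, Prod.snd_one, Complex.ext_iff]
  try ring_nf

set_option maxHeartbeats 1000000 in
lemma msCase21 :
      (∑ x0 : Bool, ∑ x1 : Bool, ∑ y0 : Bool, ∑ y1 : Bool,
        if xtrip x0 x1 (1:Fin 3) = ytrip y0 y1 (2:Fin 3)
          then expecMS (Mms 2 x0 x1 ⊗ₖ Nms 1 y0 y1) else 0) = 1 := by
  simp (config := { decide := true }) only [Fintype.sum_bool, xtrip, ytrip,
    if_true, if_false]
  simp only [expec_kron, Mms, Nms, Pi', Pi0, if_true, if_false, Bool.cond_true]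
  norm_num [Matrix.mul_apply, Fintype.sum_prod_type, Fin.sum_univ_two,
    Matrix.kroneckerMap_apply, Matrix.sub_apply, Matrix.add_apply, Matrix.one_apply,
    P0, P1, Pp, Pm, Ppi, Pmi, Matrix.cons_val', Matrix.cons_val_zero, Matrix.cons_val_one, Matrix.cons_val_two,
    Matrix.head_cons, Matrix.head_fin_const, Matrix.empty_val', Prod.ext_iff,
    Prod.fst_one, Prod.snd_one, Complex.ext_iff]
  try ring_nf

set_option maxHeartbeats 1000000 in
lemma msCase22 :
      (∑ x0 : Bool, ∑ x1 : Bool, ∑ y0 : Bool, ∑ y1 : Bool,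
        if xtrip x0 x1 (2:Fin 3) = ytrip y0 y1 (2:Fin 3)
          then expecMS (Mms 2 x0 x1 ⊗ₖ Nms 2 y0 y1) else 0) = 1 := by
  simp (config := { decide := true }) only [Fintype.sum_bool, xtrip, ytrip,
    if_true, if_false]
  simp only [expec_kron, Mms, Nms, Pi', Pi0, if_true, if_false, Bool.cond_true]
  norm_num [Matrix.mul_apply, Fintype.sum_prod_type, Fin.sum_univ_two,
    Matrix.kroneckerMap_apply, Matrix.sub_apply, Matrix.add_apply, Matrix.one_apply,
    P0, P1, Pp, Pm, Ppi, Pmi, Matrix.cons_val', Matrix.cons_val_zero, Matrix.cons_val_one, Matrix.cons_val_two,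
    Matrix.head_cons, Matrix.head_fin_const, Matrix.empty_val', Prod.ext_iff,
    Prod.fst_one, Prod.snd_one, Complex.ext_iff]
  try ring_nf

set_option maxHeartbeats 1000000 in
/-- The ideal magic square strategy wins the game with probability 1 on every
input pair `(a, b)`: summing `⟨Ψ| M_{x₀x₁|a} ⊗ N_{y₀y₁|b} |Ψ⟩` over all winning
output combinations gives 1. -/
theorem stmt_8 :
    ∀ a b : Fin 3,
      (∑ x0 : Bool, ∑ x1 : Bool, ∑ y0 : Bool, ∑ y1 : Bool,
        if xtrip x0 x1 b = ytrip y0 y1 a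
          then expecMS (Mms a x0 x1 ⊗ₖ Nms b y0 y1) else 0) = 1 := by
  intro a b
  fin_cases a <;> fin_cases b
  exacts [msCase00, msCase01, msCase02, msCase10, msCase11, msCase12,
          msCase20, msCase21, msCase22]
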